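/- Let H be a commutative bialgebra over a commutative ring k, and let f, g : H → H be bialgebra morphisms. Then (id ⋆ f) ∘ (id ⋆ g) = id ⋆ (f ⋆ g ⋆ (f ∘ g)), where ⋆ denotes the convolution product on linear endomorphisms of H. -/

import Mathlib

open scoped TensorProduct

variable {k H : Type*}

/-- The convolution product of two linear endomorphisms of a bialgebra:
`u ⋆ v = m ∘ (u ⊗ v) ∘ Δ`. -/
noncomputable def conv [CommRing k] [Ring H] [Bialgebra k H]
    (u v : H →ₗ[k] H) : H →ₗ[k] H :=
  (LinearMap.mul' k H).comp ((TensorProduct.map u v).comp (Coalgebra.comul))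

open Coalgebra in
lemma conv_repr [CommRing k] [Ring H] [Bialgebra k H] (u v : H →ₗ[k] H) (x : H) {ι : Type*}
    (r : Coalgebra.Repr k x ι) :
    conv u v x = ∑ i ∈ r.index, u (r.left i) * v (r.right i) := by
  simp only [conv, LinearMap.comp_apply, ← r.eq, map_sum, TensorProduct.map_tmul,
    LinearMap.mul'_apply]

open Coalgebra in
lemma conv_assoc [CommRing k] [Ring H] [Bialgebra k H] (u v w : H →ₗ[k] H) :
    conv (conv u v) w = conv u (conv v w) := by
  ext x
  set r := ℛ k x with hr
  set r₁ : (i : r.ι) → Coalgebra.Repr k (r.left i) (H × H) := fun i => ℛ k (r.left i) with hr1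
  set r₂ : (i : r.ι) → Coalgebra.Repr k (r.right i) (H × H) := fun i => ℛ k (r.right i) with hr2
  have key := Coalgebra.sum_tmul_tmul_eq r r₁ r₂
  set Φ : H ⊗[k] (H ⊗[k] H) →ₗ[k] H :=
    (LinearMap.mul' k H).comp (TensorProduct.map u
      ((LinearMap.mul' k H).comp (TensorProduct.map v w))) with hΦ
  have key2 := congrArg Φ key
  simp only [map_sum, hΦ, LinearMap.comp_apply, TensorProduct.map_tmul,
    LinearMap.mul'_apply] at key2
  rw [conv_repr (conv u v) w x r, conv_repr u (conv v w) x r]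
  calc ∑ i ∈ r.index, conv u v (r.left i) * w (r.right i)
      = ∑ i ∈ r.index, ∑ j ∈ (r₁ i).index,
          u ((r₁ i).left j) * (v ((r₁ i).right j) * w (r.right i)) := by
        refine Finset.sum_congr rfl fun i _ => ?_
        rw [conv_repr u v _ (r₁ i), Finset.sum_mul]
        exact Finset.sum_congr rfl fun j _ => (mul_assoc _ _ _)
    _ = ∑ i ∈ r.index, ∑ j ∈ (r₂ i).index,
          u (r.left i) * (v ((r₂ i).left j) * w ((r₂ i).right j)) := key2
    _ = ∑ i ∈ r.index, u (r.left i) * conv v w (r.right i) := by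
        refine Finset.sum_congr rfl fun i _ => ?_
        rw [conv_repr v w _ (r₂ i), Finset.mul_sum]

open Coalgebra in
lemma conv_id_comp [CommRing k] [CommRing H] [Bialgebra k H] (f g : H →ₐc[k] H) :
    (conv LinearMap.id f.toLinearMap).comp (conv LinearMap.id g.toLinearMap) =
      conv (conv LinearMap.id f.toLinearMap)
        (conv g.toLinearMap (f.toLinearMap.comp g.toLinearMap)) := by
  ext x
  set r := ℛ k x with hr
  set r₁ : (i : r.ι) → Coalgebra.Repr k (r.left i) (H × H) := fun i => ℛ k (r.left i) with hr1
  set r₂ : (i : r.ι) → Coalgebra.Repr k (r.right i) (H × H) := fun i => ℛ k (r.right i) with hr2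
  rw [LinearMap.comp_apply, conv_repr _ _ x r, map_sum,
    conv_repr (conv LinearMap.id f.toLinearMap) _ x r]
  refine Finset.sum_congr rfl fun i _ => ?_
  simp only [LinearMap.id_coe, id_eq]
  have hc : Coalgebra.comul (r.left i * g.toLinearMap (r.right i)) =
      ∑ j ∈ (r₁ i).index, ∑ l ∈ (r₂ i).index,
        ((r₁ i).left j * g.toLinearMap ((r₂ i).left l)) ⊗ₜ[k]
          ((r₁ i).right j * g.toLinearMap ((r₂ i).right l)) := by
    have h2 : Coalgebra.comul (g.toLinearMap (r.right i)) =
        TensorProduct.map g.toLinearMap g.toLinearMap (Coalgebra.comul (r.right i)) := by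
      exact (CoalgHomClass.map_comp_comul_apply g (r.right i)).symm
    rw [Bialgebra.comul_mul, h2, ← (r₁ i).eq, ← (r₂ i).eq]
    simp only [map_sum, TensorProduct.map_tmul, Finset.sum_mul_sum,
      Algebra.TensorProduct.tmul_mul_tmul]
  rw [conv_repr _ _ _ (r₁ i), conv_repr _ _ _ (r₂ i), Finset.sum_mul_sum]
  simp only [conv, LinearMap.comp_apply]
  rw [hc]
  simp only [map_sum, TensorProduct.map_tmul, LinearMap.mul'_apply, LinearMap.id_coe, id_eq,
    map_mul]
  refine Finset.sum_congr rfl fun j _ => Finset.sum_congr rfl fun l _ => ?_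
  rw [show ∀ a b : H, f.toLinearMap (a * b) = f.toLinearMap a * f.toLinearMap b
    from fun a b => map_mul f a b]
  ring

/-- For a commutative bialgebra `H` and bialgebra morphisms `f, g : H → H`, we have
`(id ⋆ f) ∘ (id ⋆ g) = id ⋆ (f ⋆ g ⋆ (f ∘ g))`. -/
theorem troesch_stmt3 [CommRing k] [CommRing H] [Bialgebra k H]
    (f g : H →ₐc[k] H) :
    (conv (LinearMap.id) f.toLinearMap).comp (conv (LinearMap.id) g.toLinearMap) =
      conv (LinearMap.id)
        (conv (conv f.toLinearMap g.toLinearMap)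
          (f.toLinearMap.comp g.toLinearMap)) := by
  rw [conv_id_comp, conv_assoc, ← conv_assoc f.toLinearMap g.toLinearMap]
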